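/- For every integer k ≥ 1 there exist 4·Δ(k) = 2k(k+1) points lying in a closed equilateral triangle of side length 2k − 2 + √3 in the Euclidean plane such that every two distinct points among them are at distance at least 1. (Equivalently, in the paper's normalization, d(4Δ(k)) ≥ 1/(2k − 2 + √3).) -/

import Mathlib

open Real

/-- A point of the Euclidean plane given by coordinates. -/
noncomputable def pt (x y : ℝ) : EuclideanSpace ℝ (Fin 2) := WithLp.toLp 2 ![x, y]

lemma dist_pt (x y x' y' : ℝ) :
    dist (pt x y) (pt x' y') = Real.sqrt ((x-x')^2 + (y-y')^2) := by
  simp [pt, EuclideanSpace.dist_eq, Fin.sum_univ_two, Real.dist_eq, sq_abs]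

lemma one_le_dist_pt {x y x' y' : ℝ} (h : 1 ≤ (x-x')^2 + (y-y')^2) :
    1 ≤ dist (pt x y) (pt x' y') := by
  rw [dist_pt]
  calc (1:ℝ) = Real.sqrt 1 := Real.sqrt_one.symm
  _ ≤ _ := Real.sqrt_le_sqrt h

/-- Membership in the convex hull of the triangle with vertices
`(0,0)`, `(s,0)`, `(s/2, s√3/2)`. -/
lemma mem_hull {s x y : ℝ} (hs : 0 < s) (hy : 0 ≤ y) (h1 : y ≤ √3 * x)
    (h2 : √3 * x + y ≤ √3 * s) :
    pt x y ∈ convexHull ℝ ({pt 0 0, pt s 0, pt (s/2) (s*√3/2)} :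
      Set (EuclideanSpace ℝ (Fin 2))) := by
  have h3 : (0:ℝ) < √3 := by positivity
  have hsq : √3 * √3 = 3 := Real.mul_self_sqrt (by norm_num)
  have key := Finset.centerMass_mem_convexHull (Finset.univ : Finset (Fin 3))
    (w := ![√3 * s - √3 * x - y, √3 * x - y, 2 * y])
    (z := ![pt 0 0, pt s 0, pt (s/2) (s*√3/2)])
    (s := ({pt 0 0, pt s 0, pt (s/2) (s*√3/2)} : Set (EuclideanSpace ℝ (Fin 2))))
    ?_ ?_ ?_
  · convert key using 1
    rw [Finset.centerMass]
    have hsum : ∑ i, ![√3 * s - √3 * x - y, √3 * x - y, 2 * y] i = √3 * s := by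
      simp [Fin.sum_univ_three]; ring
    rw [hsum, Fin.sum_univ_three]
    simp only [Matrix.cons_val_zero, Matrix.cons_val_one, Matrix.head_cons,
      Matrix.cons_val_two, Matrix.tail_cons]
    ext i
    fin_cases i <;>
      simp [pt, PiLp.smul_apply, PiLp.add_apply, smul_eq_mul] <;>
      field_simp <;> nlinarith [hsq, h3]
  · intro i _
    fin_cases i <;> simp <;> nlinarith
  · rw [show ∑ i, ![√3 * s - √3 * x - y, √3 * x - y, 2 * y] i = √3 * s by
      simp [Fin.sum_univ_three]; ring]
    positivity
  · intro i _
    fin_cases i <;> simp [Set.mem_insert_iff]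

lemma quadZ (a b : ℤ) (h : ¬(a = 0 ∧ b = 0)) : 1 ≤ a^2 + a*b + b^2 := by
  rcases eq_or_ne b 0 with rfl | hb
  · have ha : a ≠ 0 := by tauto
    have := Int.one_le_abs ha
    nlinarith [sq_abs a]
  · have hb1 : 1 ≤ b^2 := by nlinarith [Int.one_le_abs hb, sq_abs b]
    rcases eq_or_ne (2*a+b) 0 with h2 | h2
    · have : b = -2*a := by omega
      have ha : a ≠ 0 := by rintro rfl; simp at this; exact hb this
      have := Int.one_le_abs ha
      nlinarith [sq_abs a]
    · have := Int.one_le_abs h2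
      nlinarith [sq_abs (2*a+b)]

lemma sq_helperU {u v : ℝ} (h : 1 ≤ u ∨ u ≤ -1) : 1 ≤ u^2 + v^2 := by
  rcases h with h | h <;> nlinarith [sq_nonneg v, sq_nonneg (u-1), sq_nonneg (u+1)]

lemma sq_helperV {u v : ℝ} (h : 1 ≤ v ∨ v ≤ -1) : 1 ≤ u^2 + v^2 := by
  rcases h with h | h <;> nlinarith [sq_nonneg u, sq_nonneg (v-1), sq_nonneg (v+1)]

lemma latticeA (i j i' j' : ℕ) (h : ¬(i = i' ∧ j = j')) :
    1 ≤ ((i:ℝ) - i' + ((j:ℝ) - j')/2)^2 + (((j:ℝ) - j')*√3/2)^2 := by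
  have h3 : √3^2 = 3 := Real.sq_sqrt (by norm_num)
  have hq := quadZ ((i:ℤ) - i') ((j:ℤ) - j') (by omega)
  have hq' : (1:ℝ) ≤ ((i:ℝ) - i')^2 + ((i:ℝ)-i')*((j:ℝ)-j') + ((j:ℝ)-j')^2 := by
    exact_mod_cast hq
  nlinarith [hq', h3, sq_nonneg ((j:ℝ) - j')]

lemma latticeB (i j i' j' : ℕ) (h : ¬(i = i' ∧ j = j')) :
    1 ≤ ((((i:ℝ) - i') - ((j:ℝ) - j'))/2)^2 + ((((i:ℝ) - i') + ((j:ℝ) - j'))*√3/2)^2 := by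
  have h3 : √3^2 = 3 := Real.sq_sqrt (by norm_num)
  have hq := quadZ ((i:ℤ) - i') ((j:ℤ) - j') (by omega)
  have hq' : (1:ℝ) ≤ ((i:ℝ) - i')^2 + ((i:ℝ)-i')*((j:ℝ)-j') + ((j:ℝ)-j')^2 := by
    exact_mod_cast hq
  nlinarith [hq', h3, sq_nonneg ((i:ℝ) - i' + ((j:ℝ) - j'))]

lemma cross01 (k i j i' j' : ℕ) (hij : i + j < k) (hij' : i' + j' < k) :
    1 ≤ ((i:ℝ) + (j:ℝ)/2 - (2*(k:ℝ) - 2 + √3 - (i':ℝ) - (j':ℝ)/2))^2 +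
        ((j:ℝ)*√3/2 - (j':ℝ)*√3/2)^2 := by
  have h1 : (1:ℝ) ≤ √3 := by
    nlinarith [Real.sqrt_nonneg 3, Real.sq_sqrt (by norm_num : (3:ℝ) ≥ 0)]
  have hb : (i:ℝ) + j + 1 ≤ k := by exact_mod_cast hij
  have hb' : (i':ℝ) + j' + 1 ≤ k := by exact_mod_cast hij'
  have hj : (0:ℝ) ≤ j := Nat.cast_nonneg j
  have hj' : (0:ℝ) ≤ j' := Nat.cast_nonneg j'
  exact sq_helperU (Or.inr (by linarith))

lemma cross02 (k i j i' j' : ℕ) (hij : i + j < k) (hij' : i' + j' < k) :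
    1 ≤ ((i:ℝ) + (j:ℝ)/2 - ((k:ℝ) - 1 + √3/2 + ((i':ℝ) - (j':ℝ))/2))^2 +
        ((j:ℝ)*√3/2 - (2*(k:ℝ) - 2 + √3 - (i':ℝ) - (j':ℝ))*√3/2)^2 := by
  have h3 : √3^2 = 3 := Real.sq_sqrt (by norm_num)
  have h0 : (0:ℝ) ≤ √3 := Real.sqrt_nonneg 3
  have hb : (i:ℝ) + j + 1 ≤ k := by exact_mod_cast hij
  have hb' : (i':ℝ) + j' + 1 ≤ k := by exact_mod_cast hij'
  have hi : (0:ℝ) ≤ i := Nat.cast_nonneg i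
  have hi' : (0:ℝ) ≤ i' := Nat.cast_nonneg i'
  refine sq_helperV (Or.inr ?_)
  have hE : √3 ≤ 2*(k:ℝ) - 2 + √3 - i' - j' - j := by linarith
  nlinarith [mul_le_mul_of_nonneg_right hE h0, h3]

lemma cross12 (k i j i' j' : ℕ) (hij : i + j < k) (hij' : i' + j' < k) :
    1 ≤ ((2*(k:ℝ) - 2 + √3 - (i:ℝ) - (j:ℝ)/2 - ((k:ℝ) - 1 + √3/2 + ((i':ℝ) - (j':ℝ))/2))^2 +
        ((j:ℝ)*√3/2 - (2*(k:ℝ) - 2 + √3 - (i':ℝ) - (j':ℝ))*√3/2)^2) := by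
  have h3 : √3^2 = 3 := Real.sq_sqrt (by norm_num)
  have h0 : (0:ℝ) ≤ √3 := Real.sqrt_nonneg 3
  have hb : (i:ℝ) + j + 1 ≤ k := by exact_mod_cast hij
  have hb' : (i':ℝ) + j' + 1 ≤ k := by exact_mod_cast hij'
  have hi : (0:ℝ) ≤ i := Nat.cast_nonneg i
  have hi' : (0:ℝ) ≤ i' := Nat.cast_nonneg i'
  refine sq_helperV (Or.inr ?_)
  have hE : √3 ≤ 2*(k:ℝ) - 2 + √3 - i' - j' - j := by linarith
  nlinarith [mul_le_mul_of_nonneg_right hE h0, h3]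

lemma cross23 (k i j i' j' : ℕ) (hij : i + j < k) (hij' : i' + j' < k) :
    1 ≤ (((k:ℝ) - 1 + √3/2 + ((i:ℝ) - (j:ℝ))/2 - ((k:ℝ) - 1 + √3/2 + ((i':ℝ) - (j':ℝ))/2))^2 +
        ((2*(k:ℝ) - 2 + √3 - (i:ℝ) - (j:ℝ))*√3/2 - (1/2 + ((i':ℝ) + (j':ℝ))*√3/2))^2) := by
  have h3 : √3^2 = 3 := Real.sq_sqrt (by norm_num)
  have h0 : (0:ℝ) ≤ √3 := Real.sqrt_nonneg 3
  have hb : (i:ℝ) + j + 1 ≤ k := by exact_mod_cast hij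
  have hb' : (i':ℝ) + j' + 1 ≤ k := by exact_mod_cast hij'
  refine sq_helperV (Or.inl ?_)
  have hE : √3 ≤ 2*(k:ℝ) - 2 + √3 - i - j - i' - j' := by linarith
  nlinarith [mul_le_mul_of_nonneg_right hE h0, h3]

lemma cross03 (k i j i' j' : ℕ) (hij : i + j < k) (hij' : i' + j' < k) :
    1 ≤ ((i:ℝ) + (j:ℝ)/2 - ((k:ℝ) - 1 + √3/2 + ((i':ℝ) - (j':ℝ))/2))^2 +
        ((j:ℝ)*√3/2 - (1/2 + ((i':ℝ) + (j':ℝ))*√3/2))^2 := by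
  have h3 : √3^2 = 3 := Real.sq_sqrt (by norm_num)
  have h0 : (0:ℝ) ≤ √3 := Real.sqrt_nonneg 3
  have h1 : (1:ℝ) ≤ √3 := by nlinarith
  have hb : (i:ℝ) + j + 1 ≤ k := by exact_mod_cast hij
  have hb' : (i':ℝ) + j' + 1 ≤ k := by exact_mod_cast hij'
  have hi : (0:ℝ) ≤ i := Nat.cast_nonneg i
  have hi' : (0:ℝ) ≤ i' := Nat.cast_nonneg i'
  have hj' : (0:ℝ) ≤ j' := Nat.cast_nonneg j'
  rcases lt_trichotomy j (i' + j') with hc | hc | hc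
  · have hcr : (j:ℝ) + 1 ≤ (i':ℝ) + j' := by exact_mod_cast hc
    refine sq_helperV (Or.inr ?_)
    nlinarith [mul_le_mul_of_nonneg_right hcr h0]
  · have hcr : (j:ℝ) = (i':ℝ) + j' := by exact_mod_cast hc
    rw [hcr]
    have ht : (i:ℝ) + j' - k + 1 ≤ -(i':ℝ) := by linarith [hb, hcr]
    nlinarith [h3, ht, h0, sq_nonneg ((i:ℝ) + j' - k + 1),
      mul_nonneg (by linarith : (0:ℝ) ≤ (k:ℝ) - 1 - i - j') h0]
  · rcases eq_or_lt_of_le (Nat.succ_le_of_lt hc) with hc2 | hc2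
    · have hcr : (j:ℝ) = (i':ℝ) + j' + 1 := by exact_mod_cast hc2.symm
      rw [hcr]
      have ht : (i:ℝ) + j' + 2 - k ≤ -(i':ℝ) := by linarith [hb]
      nlinarith [h3, ht, h0, sq_nonneg ((i:ℝ) + j' + 2 - k),
        mul_nonneg (by linarith : (0:ℝ) ≤ (k:ℝ) - i - j' - 2) h0]
    · have hcr : (i':ℝ) + j' + 2 ≤ j := by exact_mod_cast hc2
      have h32 : (3:ℝ)/2 ≤ √3 := by nlinarith
      refine sq_helperV (Or.inl ?_)
      have : 2*√3 ≤ ((j:ℝ) - i' - j')*√3 :=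
        mul_le_mul_of_nonneg_right (by linarith) h0
      nlinarith

lemma cross13 (k i j i' j' : ℕ) (hij : i + j < k) (hij' : i' + j' < k) :
    1 ≤ ((2*(k:ℝ) - 2 + √3 - (i:ℝ) - (j:ℝ)/2 - ((k:ℝ) - 1 + √3/2 + ((i':ℝ) - (j':ℝ))/2))^2 +
        ((j:ℝ)*√3/2 - (1/2 + ((i':ℝ) + (j':ℝ))*√3/2))^2) := by
  have h3 : √3^2 = 3 := Real.sq_sqrt (by norm_num)
  have h0 : (0:ℝ) ≤ √3 := Real.sqrt_nonneg 3
  have h1 : (1:ℝ) ≤ √3 := by nlinarith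
  have hb : (i:ℝ) + j + 1 ≤ k := by exact_mod_cast hij
  have hb' : (i':ℝ) + j' + 1 ≤ k := by exact_mod_cast hij'
  have hi : (0:ℝ) ≤ i := Nat.cast_nonneg i
  have hi' : (0:ℝ) ≤ i' := Nat.cast_nonneg i'
  have hj' : (0:ℝ) ≤ j' := Nat.cast_nonneg j'
  rcases lt_trichotomy j (i' + j') with hc | hc | hc
  · have hcr : (j:ℝ) + 1 ≤ (i':ℝ) + j' := by exact_mod_cast hc
    refine sq_helperV (Or.inr ?_)
    nlinarith [mul_le_mul_of_nonneg_right hcr h0]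
  · have hcr : (j:ℝ) = (i':ℝ) + j' := by exact_mod_cast hc
    rw [hcr]
    have ht : (0:ℝ) ≤ (k:ℝ) - 1 - i - i' := by linarith [hb, hcr]
    nlinarith [h3, ht, h0, sq_nonneg ((k:ℝ) - 1 - i - i'), mul_nonneg ht h0]
  · rcases eq_or_lt_of_le (Nat.succ_le_of_lt hc) with hc2 | hc2
    · have hcr : (j:ℝ) = (i':ℝ) + j' + 1 := by exact_mod_cast hc2.symm
      rw [hcr]
      have ht : (0:ℝ) ≤ (k:ℝ) - i - i' - 2 := by linarith [hb]
      nlinarith [h3, ht, h0, sq_nonneg ((k:ℝ) - i - i' - 2), mul_nonneg ht h0]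
    · have hcr : (i':ℝ) + j' + 2 ≤ j := by exact_mod_cast hc2
      have h32 : (3:ℝ)/2 ≤ √3 := by nlinarith
      refine sq_helperV (Or.inl ?_)
      have : 2*√3 ≤ ((j:ℝ) - i' - j')*√3 :=
        mul_le_mul_of_nonneg_right (by linarith) h0
      nlinarith

/-- The four blocks of the packing. -/
noncomputable def G (k : ℕ) (b : Fin 4) (i j : ℕ) : EuclideanSpace ℝ (Fin 2) :=
  match b with
  | 0 => pt ((i:ℝ) + (j:ℝ)/2) ((j:ℝ)*√3/2)
  | 1 => pt (2*(k:ℝ) - 2 + √3 - (i:ℝ) - (j:ℝ)/2) ((j:ℝ)*√3/2)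
  | 2 => pt ((k:ℝ) - 1 + √3/2 + ((i:ℝ) - (j:ℝ))/2) ((2*(k:ℝ) - 2 + √3 - (i:ℝ) - (j:ℝ))*√3/2)
  | 3 => pt ((k:ℝ) - 1 + √3/2 + ((i:ℝ) - (j:ℝ))/2) (1/2 + ((i:ℝ) + (j:ℝ))*√3/2)

lemma Gdist (k : ℕ) (b b' : Fin 4) (i j i' j' : ℕ) (hij : i + j < k) (hij' : i' + j' < k)
    (hne : (b, i, j) ≠ (b', i', j')) : 1 ≤ dist (G k b i j) (G k b' i' j') := by
  fin_cases b <;> fin_cases b' <;> simp only [G] <;> apply one_le_dist_pt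
  · exact le_of_le_of_eq (latticeA i j i' j'
      (fun hh => hne (by rw [hh.1, hh.2]))) (by ring)
  · exact le_of_le_of_eq (cross01 k i j i' j' hij hij') (by ring)
  · exact le_of_le_of_eq (cross02 k i j i' j' hij hij') (by ring)
  · exact le_of_le_of_eq (cross03 k i j i' j' hij hij') (by ring)
  · exact le_of_le_of_eq (cross01 k i' j' i j hij' hij) (by ring)
  · exact le_of_le_of_eq (latticeA i j i' j'
      (fun hh => hne (by rw [hh.1, hh.2]))) (by ring)
  · exact le_of_le_of_eq (cross12 k i j i' j' hij hij') (by ring)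
  · exact le_of_le_of_eq (cross13 k i j i' j' hij hij') (by ring)
  · exact le_of_le_of_eq (cross02 k i' j' i j hij' hij) (by ring)
  · exact le_of_le_of_eq (cross12 k i' j' i j hij' hij) (by ring)
  · exact le_of_le_of_eq (latticeB i j i' j'
      (fun hh => hne (by rw [hh.1, hh.2]))) (by ring)
  · exact le_of_le_of_eq (cross23 k i j i' j' hij hij') (by ring)
  · exact le_of_le_of_eq (cross03 k i' j' i j hij' hij) (by ring)
  · exact le_of_le_of_eq (cross13 k i' j' i j hij' hij) (by ring)
  · exact le_of_le_of_eq (cross23 k i' j' i j hij' hij) (by ring)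
  · exact le_of_le_of_eq (latticeB i j i' j'
      (fun hh => hne (by rw [hh.1, hh.2]))) (by ring)

lemma card_aux (k : ℕ) (hk : 1 ≤ k) :
    Fintype.card (Fin 4 × Σ j : Fin k, Fin (k - j)) = 2 * k * (k + 1) := by
  rw [Fintype.card_prod, Fintype.card_fin, Fintype.card_sigma]
  simp only [Fintype.card_fin]
  rw [Fin.sum_univ_eq_sum_range (fun j => k - j) k]
  have h2 : ∑ j ∈ Finset.range k, (k - j) = ∑ j ∈ Finset.range k, (j+1) := by
    rw [← Finset.sum_range_reflect]
    apply Finset.sum_congr rfl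
    intro j hj; rw [Finset.mem_range] at hj; omega
  have h4 : ∑ j ∈ Finset.range k, (j+1) = (∑ j ∈ Finset.range k, j) + k := by
    rw [Finset.sum_add_distrib, Finset.sum_const, smul_eq_mul, mul_one, Finset.card_range]
  rw [h2, h4]
  have h3' := congrArg (Nat.cast : ℕ → ℤ) (Finset.sum_range_id_mul_two k)
  push_cast [Nat.cast_sub hk] at h3'
  zify
  linear_combination 2 * h3'

/-- Forget the dependent typing of an index. -/
def proj (k : ℕ) (q : Fin 4 × Σ j : Fin k, Fin (k - j)) : Fin 4 × ℕ × ℕ :=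
  (q.1, (q.2.2 : ℕ), (q.2.1 : ℕ))

lemma sigma_ext {k : ℕ} {x y : Σ j : Fin k, Fin (k - j)}
    (h1 : (x.1:ℕ) = y.1) (h2 : (x.2:ℕ) = y.2) : x = y := by
  obtain ⟨⟨j, hj⟩, ⟨i, hi⟩⟩ := x
  obtain ⟨⟨j2, hj2⟩, ⟨i2, hi2⟩⟩ := y
  dsimp at h1 h2
  subst h1; subst h2; rfl

set_option maxHeartbeats 1000000 in
lemma G_mem_hull (k : ℕ) (hk : 1 ≤ k) (b : Fin 4) (i j : ℕ) (hlt : i + j < k) :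
    G k b i j ∈ convexHull ℝ ({pt 0 0, pt (2*(k:ℝ) - 2 + √3) 0,
      pt ((2*(k:ℝ) - 2 + √3)/2) ((2*(k:ℝ) - 2 + √3)*√3/2)} :
      Set (EuclideanSpace ℝ (Fin 2))) := by
  have h3 : √3^2 = 3 := Real.sq_sqrt (by norm_num)
  have h0 : (0:ℝ) ≤ √3 := Real.sqrt_nonneg 3
  have hp : (0:ℝ) < √3 := Real.sqrt_pos.mpr (by norm_num)
  have hk1 : (1:ℝ) ≤ (k:ℝ) := by exact_mod_cast hk
  have hb : (i:ℝ) + (j:ℝ) + 1 ≤ k := by exact_mod_cast hlt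
  have hi0 : (0:ℝ) ≤ (i:ℝ) := Nat.cast_nonneg _
  have hj0 : (0:ℝ) ≤ (j:ℝ) := Nat.cast_nonneg _
  have hA : (0:ℝ) ≤ √3 * ((k:ℝ) - 1 - i - j) := mul_nonneg h0 (by linarith)
  have hB : (0:ℝ) ≤ √3 * (i:ℝ) := mul_nonneg h0 hi0
  have hC : (0:ℝ) ≤ √3 * (j:ℝ) := mul_nonneg h0 hj0
  have hD : (0:ℝ) ≤ √3 * ((k:ℝ) - 1 - j) := mul_nonneg h0 (by linarith)
  have hE : (0:ℝ) ≤ √3 * ((k:ℝ) - 1 - i) := mul_nonneg h0 (by linarith)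
  fin_cases b <;> simp only [G] <;> apply mem_hull <;>
    nlinarith [hA, hB, hC, hD, hE, h3, h0, hp, hk1, hb, hi0, hj0]

/-- **Packings of `4Δ(k)` points.**
For every integer `k ≥ 1` there exist `4·Δ(k) = 2k(k+1)` points lying in a
closed equilateral triangle of side length `2k − 2 + √3` (the convex hull of
three points at pairwise distance `2k − 2 + √3`) such that every two distinct
points among them are at distance at least `1`. -/
theorem four_triangular_packing (k : ℕ) (hk : 1 ≤ k) :
    ∃ (a b c : EuclideanSpace ℝ (Fin 2))
      (P : Fin (2 * k * (k + 1)) → EuclideanSpace ℝ (Fin 2)),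
      dist a b = 2 * (k : ℝ) - 2 + Real.sqrt 3 ∧
      dist a c = 2 * (k : ℝ) - 2 + Real.sqrt 3 ∧
      dist b c = 2 * (k : ℝ) - 2 + Real.sqrt 3 ∧
      (∀ i, P i ∈ convexHull ℝ ({a, b, c} : Set (EuclideanSpace ℝ (Fin 2)))) ∧
      (∀ i j, i ≠ j → 1 ≤ dist (P i) (P j)) := by
  obtain ⟨e⟩ : Nonempty (Fin (2 * k * (k + 1)) ≃ (Fin 4 × Σ j : Fin k, Fin (k - j))) :=
    ⟨(Fintype.equivFinOfCardEq (card_aux k hk)).symm⟩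
  have h3 : √3^2 = 3 := Real.sq_sqrt (by norm_num)
  have h0 : (0:ℝ) ≤ √3 := Real.sqrt_nonneg 3
  have hp : (0:ℝ) < √3 := Real.sqrt_pos.mpr (by norm_num)
  have hk1 : (1:ℝ) ≤ (k:ℝ) := by exact_mod_cast hk
  have hs0 : (0:ℝ) ≤ 2*(k:ℝ) - 2 + √3 := by linarith
  refine ⟨pt 0 0, pt (2*(k:ℝ) - 2 + √3) 0,
    pt ((2*(k:ℝ) - 2 + √3)/2) ((2*(k:ℝ) - 2 + √3)*√3/2),
    fun n => G k (proj k (e n)).1 (proj k (e n)).2.1 (proj k (e n)).2.2,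
    ?_, ?_, ?_, ?_, ?_⟩
  · rw [dist_pt,
      show (0 - (2*(k:ℝ) - 2 + √3))^2 + ((0:ℝ)-0)^2 = (2*(k:ℝ)-2+√3)^2 by ring,
      Real.sqrt_sq hs0]
  · rw [dist_pt,
      show (0 - (2*(k:ℝ) - 2 + √3)/2)^2 + (0 - (2*(k:ℝ) - 2 + √3)*√3/2)^2
          = (2*(k:ℝ)-2+√3)^2 by linear_combination ((2*(k:ℝ)-2+√3)^2/4) * h3,
      Real.sqrt_sq hs0]
  · rw [dist_pt,
      show ((2*(k:ℝ) - 2 + √3) - (2*(k:ℝ) - 2 + √3)/2)^2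
            + (0 - (2*(k:ℝ) - 2 + √3)*√3/2)^2
          = (2*(k:ℝ)-2+√3)^2 by linear_combination ((2*(k:ℝ)-2+√3)^2/4) * h3,
      Real.sqrt_sq hs0]
  · intro n
    rcases hq : e n with ⟨b, ⟨j, i⟩⟩
    beta_reduce
    rw [hq]
    simp only [proj]
    exact G_mem_hull k hk b i j (by have := i.isLt; have := j.isLt; omega)
  · intro n m hnm
    rcases h1 : e n with ⟨b, ⟨j, i⟩⟩
    rcases h2 : e m with ⟨b', ⟨j', i'⟩⟩
    beta_reduce
    rw [h1, h2]
    simp only [proj]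
    refine Gdist k b b' i j i' j' ?_ ?_ ?_
    · have := i.isLt; have := j.isLt; omega
    · have := i'.isLt; have := j'.isLt; omega
    · intro hEq
      obtain ⟨hbb, hii, hjj⟩ : b = b' ∧ (i:ℕ) = i' ∧ (j:ℕ) = j' := by
        simpa [Prod.ext_iff] using hEq
      have hsig : (⟨j, i⟩ : Σ j : Fin k, Fin (k - j)) = ⟨j', i'⟩ := sigma_ext hjj hii
      exact hnm (e.injective (by rw [h1, h2, hbb, hsig]))
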